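/- Let β>0, ψ>0 and κ∈(0,β²/4) with e^{−βψ} ≥ 4κ/β². Set σ₁ = (β+√(β²−4κ))/2 and σ₂ = (β−√(β²−4κ))/2. Then 0 < σ₂ < σ₁, σ₂/σ₁ < e^{(σ₂−σ₁)ψ}, and there exist constants C₁ < 0 < C₂ with C₁σ₁ + C₂σ₂ = 0 and C₁e^{σ₁ψ} + C₂e^{σ₂ψ} = 1 such that the function φ(θ) = C₁e^{σ₁θ} + C₂e^{σ₂θ} satisfies, for every θ∈[0,ψ]: φ(θ) ≥ 1, φ(θ) ≤ φ(0) = C₁ + C₂, φ′(θ) ≤ 0 and φ″(θ) ≤ 0, with φ′(0) = 0. -/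

import Mathlib

open Real Filter Metric Set Topology

noncomputable section

/-- Euclidean space ℝ^N. -/
abbrev EucSp (N : ℕ) := EuclideanSpace ℝ (Fin N)

namespace Paper

variable {N : ℕ}

/-- Frobenius norm of a matrix. -/
def frobNorm (X : Matrix (Fin N) (Fin N) ℝ) : ℝ :=
  Real.sqrt (∑ i, ∑ j, (X i j) ^ 2)

/-- Hessian matrix of a function at a point, in the standard basis of ℝ^N. -/
def hess (φ : EucSp N → ℝ) (x : EucSp N) : Matrix (Fin N) (Fin N) ℝ :=
  fun i j => iteratedFDeriv ℝ 2 φ x ![EuclideanSpace.single i 1, EuclideanSpace.single j 1]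

/-- The first-order term  h(x)·∇φ(x) |∇φ(x)|^α. -/
def drift (h : EucSp N → EucSp N) (α : ℝ) (φ : EucSp N → ℝ) (x : EucSp N) : ℝ :=
  (inner ℝ (h x) (gradient φ x) : ℝ) * ‖gradient φ x‖ ^ α

/-- |s|^α s -/
def sgnPow (α s : ℝ) : ℝ := |s| ^ α * s

/-- Viscosity supersolution of  F(x,∇v,D²v) + h(x)·∇v|∇v|^α ≤ f(x,v)  in Ω:
at every point of Ω, either v is locally constant ≡ c and 0 ≤ f(·,c) nearby, or every C²
test function with nonvanishing gradient touching from below satisfies the inequality. -/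
def IsViscositySuper (Ω : Set (EucSp N))
    (F : EucSp N → EucSp N → Matrix (Fin N) (Fin N) ℝ → ℝ)
    (h : EucSp N → EucSp N) (α : ℝ) (f : EucSp N → ℝ → ℝ) (v : EucSp N → ℝ) : Prop :=
  ∀ x₀ ∈ Ω,
    (∃ δ > 0, ball x₀ δ ⊆ Ω ∧ (∀ x ∈ ball x₀ δ, v x = v x₀) ∧
      ∀ x ∈ ball x₀ δ, 0 ≤ f x (v x₀)) ∨
    (∀ φ : EucSp N → ℝ, ContDiff ℝ 2 φ → gradient φ x₀ ≠ 0 →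
      IsLocalMinOn (fun x => v x - φ x) Ω x₀ →
      F x₀ (gradient φ x₀) (hess φ x₀) + drift h α φ x₀ ≤ f x₀ (v x₀))

/-- Viscosity subsolution of  F(x,∇v,D²v) + h(x)·∇v|∇v|^α ≥ f(x,v)  in Ω. -/
def IsViscositySub (Ω : Set (EucSp N))
    (F : EucSp N → EucSp N → Matrix (Fin N) (Fin N) ℝ → ℝ)
    (h : EucSp N → EucSp N) (α : ℝ) (f : EucSp N → ℝ → ℝ) (v : EucSp N → ℝ) : Prop :=
  ∀ x₀ ∈ Ω,
    (∃ δ > 0, ball x₀ δ ⊆ Ω ∧ (∀ x ∈ ball x₀ δ, v x = v x₀) ∧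
      ∀ x ∈ ball x₀ δ, f x (v x₀) ≤ 0) ∨
    (∀ φ : EucSp N → ℝ, ContDiff ℝ 2 φ → gradient φ x₀ ≠ 0 →
      IsLocalMaxOn (fun x => v x - φ x) Ω x₀ →
      f x₀ (v x₀) ≤ F x₀ (gradient φ x₀) (hess φ x₀) + drift h α φ x₀)

/-- Viscosity solution of  F(x,∇v,D²v) + h(x)·∇v|∇v|^α = f(x,v)  in Ω. -/
def IsViscositySolution (Ω : Set (EucSp N))
    (F : EucSp N → EucSp N → Matrix (Fin N) (Fin N) ℝ → ℝ)
    (h : EucSp N → EucSp N) (α : ℝ) (f : EucSp N → ℝ → ℝ) (v : EucSp N → ℝ) : Prop :=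
  IsViscositySuper Ω F h α f v ∧ IsViscositySub Ω F h α f v

/-- (H1): homogeneity -/
def H1 (D : Set (EucSp N)) (F : EucSp N → EucSp N → Matrix (Fin N) (Fin N) ℝ → ℝ)
    (α : ℝ) : Prop :=
  ∀ x ∈ D, ∀ p : EucSp N, p ≠ 0 → ∀ X : Matrix (Fin N) (Fin N) ℝ,
    ∀ t : ℝ, t ≠ 0 → ∀ μ : ℝ, 0 ≤ μ →
      F x (t • p) (μ • X) = |t| ^ α * μ * F x p X

/-- (H2): uniform (degenerate) ellipticity -/
def H2 (D : Set (EucSp N)) (F : EucSp N → EucSp N → Matrix (Fin N) (Fin N) ℝ → ℝ)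
    (α a A : ℝ) : Prop :=
  ∀ x ∈ D, ∀ p : EucSp N, p ≠ 0 → ∀ M P : Matrix (Fin N) (Fin N) ℝ, P.PosSemidef →
    a * ‖p‖ ^ α * P.trace ≤ F x p (M + P) - F x p M ∧
    F x p (M + P) - F x p M ≤ A * ‖p‖ ^ α * P.trace

/-- (H3): continuity in x -/
def H3 (D : Set (EucSp N)) (F : EucSp N → EucSp N → Matrix (Fin N) (Fin N) ℝ → ℝ)
    (α : ℝ) : Prop :=
  ∃ ωt : ℝ → ℝ, Continuous ωt ∧ ωt 0 = 0 ∧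
    ∀ x ∈ D, ∀ y ∈ D, ∀ p : EucSp N, p ≠ 0 → ∀ X : Matrix (Fin N) (Fin N) ℝ,
      |F x p X - F y p X| ≤ ωt ‖x - y‖ * ‖p‖ ^ α * frobNorm X

/-- (H4): the usual structural condition for comparison -/
def H4 (D : Set (EucSp N)) (F : EucSp N → EucSp N → Matrix (Fin N) (Fin N) ℝ → ℝ) : Prop :=
  ∃ ω : ℝ → ℝ, Continuous ω ∧ ω 0 = 0 ∧
    ∀ ζ : ℝ, 0 < ζ → ∀ X Y : Matrix (Fin N) (Fin N) ℝ,
      (Matrix.fromBlocks X 0 0 Y + ζ • (1 : Matrix (Fin N ⊕ Fin N) (Fin N ⊕ Fin N) ℝ)).PosSemidef →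
      ((4 * ζ) • Matrix.fromBlocks (1 : Matrix (Fin N) (Fin N) ℝ) (-1) (-1) 1
          - Matrix.fromBlocks X 0 0 Y).PosSemidef →
      ∀ x ∈ D, ∀ y ∈ D, x ≠ y →
        F x (ζ • (x - y)) X - F y (ζ • (x - y)) (-Y) ≤ ω (ζ * ‖x - y‖ ^ 2)

/-- (H5): hypothesis on the drift h -/
def H5 (h : EucSp N → EucSp N) (α : ℝ) : Prop :=
  (α ≤ 0 ∧ ∃ C : ℝ, 0 ≤ C ∧ ∀ x y : EucSp N, ‖h x - h y‖ ≤ C * ‖x - y‖ ^ (1 + α)) ∨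
  (0 < α ∧ ∀ x y : EucSp N, (inner ℝ (h x - h y) (x - y) : ℝ) ≤ 0)

/-- uniform exterior cone condition with parameters ψ (opening) and r (height) -/
def UnifExtCone (Ω : Set (EucSp N)) (ψ r : ℝ) : Prop :=
  ∀ z ∈ frontier Ω, ∃ n : EucSp N, ‖n‖ = 1 ∧
    ∀ x ∈ Ω ∩ ball z r, ‖x - z‖ * Real.cos ψ < (inner ℝ (x - z) n : ℝ)

/-- uniform exterior cone condition -/
def ExtConeCond (Ω : Set (EucSp N)) : Prop :=
  ∃ ψ ∈ Set.Ioo (0 : ℝ) π, ∃ r > (0 : ℝ), UnifExtCone Ω ψ r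

/-- A bounded `C²` (regular) domain, described by a `C²` defining function with
nonvanishing gradient on the boundary. -/
def IsC2Domain (Ω : Set (EucSp N)) : Prop :=
  ∃ ρ : EucSp N → ℝ, ContDiff ℝ 2 ρ ∧ Ω = {x | ρ x < 0} ∧
    frontier Ω = {x | ρ x = 0} ∧ ∀ x ∈ frontier Ω, gradient ρ x ≠ 0

/-- right hand side corresponding to the eigenvalue equation
F[u] + h·∇u|∇u|^α + (V+λ)|u|^α u = 0 -/
def eigenRHS (V : EucSp N → ℝ) (lam α : ℝ) : EucSp N → ℝ → ℝ :=
  fun x s => -((V x + lam) * sgnPow α s)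

/-- The principal eigenvalue λ̄(O). -/
def lambdaBar (O : Set (EucSp N))
    (F : EucSp N → EucSp N → Matrix (Fin N) (Fin N) ℝ → ℝ)
    (h : EucSp N → EucSp N) (V : EucSp N → ℝ) (α : ℝ) : ℝ :=
  sSup {lam : ℝ | ∃ u : EucSp N → ℝ, ContinuousOn u O ∧ (∃ C : ℝ, ∀ x ∈ O, |u x| ≤ C) ∧
    (∀ x ∈ O, 0 < u x) ∧ IsViscositySuper O F h α (eigenRHS V lam α) u}

/-- λ_e: the supremum of λ̄(Ω') over bounded regular domains Ω' compactly containing Ω. -/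
def lambdaE (Ω : Set (EucSp N))
    (F : EucSp N → EucSp N → Matrix (Fin N) (Fin N) ℝ → ℝ)
    (h : EucSp N → EucSp N) (V : EucSp N → ℝ) (α : ℝ) : ℝ :=
  sSup {lam : ℝ | ∃ Ω' : Set (EucSp N), IsOpen Ω' ∧ Bornology.IsBounded Ω' ∧
    IsConnected Ω' ∧ IsC2Domain Ω' ∧ closure Ω ⊆ Ω' ∧ lam = lambdaBar Ω' F h V α}

/-- λ̃: the supremum of λ admitting a supersolution positive on the closure of Ω. -/
def lambdaTilde (Ω : Set (EucSp N))
    (F : EucSp N → EucSp N → Matrix (Fin N) (Fin N) ℝ → ℝ)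
    (h : EucSp N → EucSp N) (V : EucSp N → ℝ) (α : ℝ) : ℝ :=
  sSup {lam : ℝ | ∃ u : EucSp N → ℝ, ContinuousOn u (closure Ω) ∧
    (∀ x ∈ closure Ω, 0 < u x) ∧ IsViscositySuper Ω F h α (eigenRHS V lam α) u}

/-- γ-Hölder continuity on a set. -/
def IsHolderOn (φ : EucSp N → ℝ) (S : Set (EucSp N)) (γ : ℝ) : Prop :=
  ∃ C > (0 : ℝ), ∀ x ∈ S, ∀ y ∈ S, |φ x - φ y| ≤ C * ‖x - y‖ ^ γ

/-- Pucci maximal operator M⁺_{a,A} -/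
def pucciPlus (a A : ℝ) (M : Matrix (Fin N) (Fin N) ℝ) : ℝ :=
  if hM : M.IsHermitian then
    ∑ i, (A * max (hM.eigenvalues i) 0 + a * min (hM.eigenvalues i) 0)
  else 0

/-- Pucci minimal operator M⁻_{a,A} -/
def pucciMinus (a A : ℝ) (M : Matrix (Fin N) (Fin N) ℝ) : ℝ :=
  if hM : M.IsHermitian then
    ∑ i, (a * max (hM.eigenvalues i) 0 + A * min (hM.eigenvalues i) 0)
  else 0

/-- rank-one (outer) product u ⊗ v -/
def outer (u v : EucSp N) : Matrix (Fin N) (Fin N) ℝ :=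
  Matrix.of fun i j => u i * v j

end Paper

open Paper

lemma stmt17_aux_hasDerivAt (c σ θ : ℝ) :
    HasDerivAt (fun t => c * Real.exp (σ * t)) (c * σ * Real.exp (σ * θ)) θ := by
  have h : HasDerivAt (fun t : ℝ => σ * t) (σ * 1) θ := (hasDerivAt_id θ).const_mul σ
  have : HasDerivAt (fun t => c * Real.exp (σ * t)) (c * (Real.exp (σ * θ) * (σ * 1))) θ :=
    (h.exp).const_mul c
  convert this using 1
  ring

lemma stmt17_aux_deriv (C₁ C₂ σ₁ σ₂ : ℝ) (θ : ℝ) :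
    deriv (fun t => C₁ * Real.exp (σ₁ * t) + C₂ * Real.exp (σ₂ * t)) θ =
      C₁ * σ₁ * Real.exp (σ₁ * θ) + C₂ * σ₂ * Real.exp (σ₂ * θ) :=
  ((stmt17_aux_hasDerivAt C₁ σ₁ θ).add (stmt17_aux_hasDerivAt C₂ σ₂ θ)).deriv

/-- the one dimensional profile φ(θ) = C₁e^{σ₁θ} + C₂e^{σ₂θ} used in the
construction of the exterior cone barrier. -/
theorem stmt17_barrier_profile
    (β ψ κ : ℝ) (hβ : 0 < β) (hψ : 0 < ψ) (hκ : 0 < κ) (hκ' : κ < β ^ 2 / 4)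
    (hexp : 4 * κ / β ^ 2 ≤ Real.exp (-β * ψ))
    (σ₁ σ₂ : ℝ)
    (hσ₁ : σ₁ = (β + Real.sqrt (β ^ 2 - 4 * κ)) / 2)
    (hσ₂ : σ₂ = (β - Real.sqrt (β ^ 2 - 4 * κ)) / 2) :
    0 < σ₂ ∧ σ₂ < σ₁ ∧ σ₂ / σ₁ < Real.exp ((σ₂ - σ₁) * ψ) ∧
    ∃ C₁ C₂ : ℝ, C₁ < 0 ∧ 0 < C₂ ∧
      C₁ * σ₁ + C₂ * σ₂ = 0 ∧
      C₁ * Real.exp (σ₁ * ψ) + C₂ * Real.exp (σ₂ * ψ) = 1 ∧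
      C₁ * Real.exp (σ₁ * 0) + C₂ * Real.exp (σ₂ * 0) = C₁ + C₂ ∧
      deriv (fun θ => C₁ * Real.exp (σ₁ * θ) + C₂ * Real.exp (σ₂ * θ)) 0 = 0 ∧
      ∀ θ ∈ Set.Icc (0 : ℝ) ψ,
        1 ≤ C₁ * Real.exp (σ₁ * θ) + C₂ * Real.exp (σ₂ * θ) ∧
        C₁ * Real.exp (σ₁ * θ) + C₂ * Real.exp (σ₂ * θ) ≤ C₁ + C₂ ∧
        deriv (fun θ => C₁ * Real.exp (σ₁ * θ) + C₂ * Real.exp (σ₂ * θ)) θ ≤ 0 ∧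
        deriv (deriv (fun θ => C₁ * Real.exp (σ₁ * θ) + C₂ * Real.exp (σ₂ * θ))) θ ≤ 0 := by
  set s := Real.sqrt (β ^ 2 - 4 * κ) with hs
  have hdpos : (0 : ℝ) < β ^ 2 - 4 * κ := by nlinarith
  have hs0 : 0 < s := Real.sqrt_pos.mpr hdpos
  have hs2 : s ^ 2 = β ^ 2 - 4 * κ := Real.sq_sqrt hdpos.le
  have hsβ : s < β := by
    rw [hs]
    exact (Real.sqrt_lt' hβ).mpr (by nlinarith)
  have hσ₂pos : 0 < σ₂ := by rw [hσ₂]; linarith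
  have hlt : σ₂ < σ₁ := by rw [hσ₁, hσ₂]; linarith
  have hσ₁pos : 0 < σ₁ := hσ₂pos.trans hlt
  have hprod : σ₁ * σ₂ = κ := by rw [hσ₁, hσ₂]; nlinarith
  -- key inequality
  have hkey : σ₂ / σ₁ < Real.exp ((σ₂ - σ₁) * ψ) := by
    have h1 : σ₂ / σ₁ ≤ 4 * κ / β ^ 2 := by
      rw [div_le_div_iff₀ hσ₁pos (by positivity)]
      have hfac : 0 ≤ (β - s) * (2 * β * s + s ^ 2) := by
        apply mul_nonneg (by linarith) (by nlinarith)
      rw [hσ₁, hσ₂]; nlinarith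
    have h2 : Real.exp (-β * ψ) < Real.exp ((σ₂ - σ₁) * ψ) := by
      apply Real.exp_lt_exp.mpr
      have h3 : σ₂ - σ₁ = -s := by rw [hσ₁, hσ₂]; ring
      rw [h3]; nlinarith
    linarith
  refine ⟨hσ₂pos, hlt, hkey, ?_⟩
  -- constants
  set D : ℝ := Real.exp (σ₂ * ψ) - σ₂ / σ₁ * Real.exp (σ₁ * ψ) with hD
  have hDpos : 0 < D := by
    have h4 : σ₂ / σ₁ < Real.exp (σ₂ * ψ) / Real.exp (σ₁ * ψ) := by
      have he : Real.exp ((σ₂ - σ₁) * ψ) = Real.exp (σ₂ * ψ) / Real.exp (σ₁ * ψ) := by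
        rw [← Real.exp_sub]; ring_nf
      rw [← he]; exact hkey
    have h5 := (lt_div_iff₀ (Real.exp_pos (σ₁ * ψ))).mp h4
    rw [hD]; linarith
  set C₂ : ℝ := 1 / D with hC₂
  set C₁ : ℝ := -(σ₂ / σ₁) * C₂ with hC₁
  have hC₂pos : 0 < C₂ := by positivity
  have hC₁neg : C₁ < 0 := by
    rw [hC₁]
    have h6 : 0 < σ₂ / σ₁ := by positivity
    nlinarith
  have heq1 : C₁ * σ₁ + C₂ * σ₂ = 0 := by
    rw [hC₁]; field_simp; ring
  have heq2 : C₁ * Real.exp (σ₁ * ψ) + C₂ * Real.exp (σ₂ * ψ) = 1 := by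
    have h7 : C₁ * Real.exp (σ₁ * ψ) + C₂ * Real.exp (σ₂ * ψ) = C₂ * D := by
      rw [hC₁, hD]; ring
    rw [h7, hC₂]
    field_simp
  refine ⟨C₁, C₂, hC₁neg, hC₂pos, heq1, heq2, by norm_num, ?_, ?_⟩
  · rw [stmt17_aux_deriv]
    simp only [mul_zero, Real.exp_zero, mul_one]
    linarith [heq1]
  -- per-θ facts
  have hderiv_nonpos : ∀ θ : ℝ, 0 ≤ θ →
      deriv (fun t => C₁ * Real.exp (σ₁ * t) + C₂ * Real.exp (σ₂ * t)) θ ≤ 0 := by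
    intro θ hθ
    rw [stmt17_aux_deriv]
    have hexp_le : Real.exp (σ₂ * θ) ≤ Real.exp (σ₁ * θ) :=
      Real.exp_le_exp.mpr (by nlinarith)
    have key : C₁ * σ₁ * Real.exp (σ₁ * θ) + C₂ * σ₂ * Real.exp (σ₂ * θ)
        = C₂ * σ₂ * (Real.exp (σ₂ * θ) - Real.exp (σ₁ * θ)) := by
      linear_combination (Real.exp (σ₁ * θ)) * heq1
    rw [key]
    exact mul_nonpos_of_nonneg_of_nonpos (mul_pos hC₂pos hσ₂pos).le
      (by linarith)
  have hcont : ContinuousOn (fun t => C₁ * Real.exp (σ₁ * t) + C₂ * Real.exp (σ₂ * t))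
      (Set.Icc 0 ψ) := by
    apply Continuous.continuousOn
    fun_prop
  have hdiff : ∀ t : ℝ, DifferentiableAt ℝ
      (fun t => C₁ * Real.exp (σ₁ * t) + C₂ * Real.exp (σ₂ * t)) t := fun t =>
    ((stmt17_aux_hasDerivAt C₁ σ₁ t).add (stmt17_aux_hasDerivAt C₂ σ₂ t)).differentiableAt
  have hanti : AntitoneOn (fun t => C₁ * Real.exp (σ₁ * t) + C₂ * Real.exp (σ₂ * t))
      (Set.Icc 0 ψ) := by
    apply antitoneOn_of_deriv_nonpos (convex_Icc 0 ψ) hcont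
    · intro t ht
      exact (hdiff t).differentiableWithinAt
    · intro t ht
      rw [interior_Icc] at ht
      exact hderiv_nonpos t ht.1.le
  intro θ hθ
  refine ⟨?_, ?_, hderiv_nonpos θ hθ.1, ?_⟩
  · have h8 : C₁ * Real.exp (σ₁ * ψ) + C₂ * Real.exp (σ₂ * ψ) ≤
        C₁ * Real.exp (σ₁ * θ) + C₂ * Real.exp (σ₂ * θ) :=
      hanti hθ (Set.right_mem_Icc.mpr hψ.le) hθ.2
    linarith [heq2]
  · have h9 : C₁ * Real.exp (σ₁ * θ) + C₂ * Real.exp (σ₂ * θ) ≤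
        C₁ * Real.exp (σ₁ * 0) + C₂ * Real.exp (σ₂ * 0) :=
      hanti (Set.left_mem_Icc.mpr hψ.le) hθ hθ.1
    rw [mul_zero, mul_zero, Real.exp_zero, mul_one, mul_one] at h9
    exact h9
  · have hrw : deriv (fun t => C₁ * Real.exp (σ₁ * t) + C₂ * Real.exp (σ₂ * t)) =
        fun t => C₁ * σ₁ * Real.exp (σ₁ * t) + C₂ * σ₂ * Real.exp (σ₂ * t) := by
      funext t
      exact stmt17_aux_deriv C₁ C₂ σ₁ σ₂ t
    have h2d : deriv (deriv (fun t => C₁ * Real.exp (σ₁ * t) + C₂ * Real.exp (σ₂ * t))) θ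
        = C₁ * σ₁ * σ₁ * Real.exp (σ₁ * θ) + C₂ * σ₂ * σ₂ * Real.exp (σ₂ * θ) := by
      rw [hrw]
      exact stmt17_aux_deriv (C₁ * σ₁) (C₂ * σ₂) σ₁ σ₂ θ
    rw [h2d]
    have hexp_le : Real.exp (σ₂ * θ) ≤ Real.exp (σ₁ * θ) :=
      Real.exp_le_exp.mpr (mul_le_mul_of_nonneg_right hlt.le hθ.1)
    have h1 : σ₂ * Real.exp (σ₂ * θ) ≤ σ₁ * Real.exp (σ₁ * θ) :=
      mul_le_mul hlt.le hexp_le (Real.exp_pos _).le hσ₁pos.le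
    have key : C₁ * σ₁ * σ₁ * Real.exp (σ₁ * θ) + C₂ * σ₂ * σ₂ * Real.exp (σ₂ * θ)
        = C₂ * σ₂ * (σ₂ * Real.exp (σ₂ * θ) - σ₁ * Real.exp (σ₁ * θ)) := by
      linear_combination (σ₁ * Real.exp (σ₁ * θ)) * heq1
    rw [key]
    exact mul_nonpos_of_nonneg_of_nonpos (mul_pos hC₂pos hσ₂pos).le (by linarith)
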